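/- Let d ≥ 1, n ≥ 1 and let y_1, …, y_n ∈ ℝ^d satisfy Σ_{j=1}^n y_j = 0 and Σ_{j=1}^n y_j y_jᵀ = n I_d. For a > 0, define T(a) = n (π/(a+1))^{d/2} · d/(2(a+1)) − 2 (2π/(2a+1))^{d/2} Σ_{j=1}^n (‖y_j‖²/(2a+1)) exp(−‖y_j‖²/(4a+2)) + (1/n) (π/a)^{d/2} Σ_{i,j=1}^n y_iᵀ y_j exp(−‖y_i − y_j‖²/(4a)). Then lim_{a→∞} (a^{d/2+2} / (n π^{d/2})) · 16 · T(a) = b̃_{1,d} + 2 b_{1,d}, where b_{1,d} = n^{−2} Σ_{i,j=1}^n (y_iᵀ y_j)³ is Mardia's measure of multivariate skewness and b̃_{1,d} = n^{−2} Σ_{i,j=1}^n y_iᵀ y_j ‖y_i‖² ‖y_j‖² is the skewness measure of Móri, Rohatgi and Székely. -/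

import Mathlib

open MeasureTheory Real Filter Topology

/-- Closed form of the weighted `L²`-test statistic `T_{n,a}` for the points
`y 1, …, y n ∈ ℝ^d` and weight parameter `a`. -/
noncomputable def Tstat (d n : ℕ) (y : Fin n → EuclideanSpace ℝ (Fin d)) (a : ℝ) : ℝ :=
  (n : ℝ) * (π / (a + 1)) ^ ((d : ℝ) / 2) * ((d : ℝ) / (2 * (a + 1)))
    - 2 * (2 * π / (2 * a + 1)) ^ ((d : ℝ) / 2)
        * ∑ j, ‖y j‖ ^ 2 / (2 * a + 1) * Real.exp (-‖y j‖ ^ 2 / (4 * a + 2))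
    + (n : ℝ)⁻¹ * (π / a) ^ ((d : ℝ) / 2)
        * ∑ i, ∑ j, (inner ℝ (y i) (y j) : ℝ) * Real.exp (-‖y i - y j‖ ^ 2 / (4 * a))

/-- Mardia's measure of multivariate sample skewness. -/
noncomputable def mardiaSkew (d n : ℕ) (y : Fin n → EuclideanSpace ℝ (Fin d)) : ℝ :=
  ((n : ℝ) ^ 2)⁻¹ * ∑ i, ∑ j, (inner ℝ (y i) (y j) : ℝ) ^ 3

/-- The measure of multivariate sample skewness of Móri, Rohatgi and Székely. -/
noncomputable def mrsSkew (d n : ℕ) (y : Fin n → EuclideanSpace ℝ (Fin d)) : ℝ :=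
  ((n : ℝ) ^ 2)⁻¹ * ∑ i, ∑ j, (inner ℝ (y i) (y j) : ℝ) * ‖y i‖ ^ 2 * ‖y j‖ ^ 2

/-- First-order exponential remainder. -/
noncomputable def expRem1 (x : ℝ) : ℝ := Real.exp (-x) - 1 + x

/-- Second-order exponential remainder. -/
noncomputable def expRem3 (x : ℝ) : ℝ := Real.exp (-x) - 1 + x - x ^ 2 / 2

lemma expRem1_abs_le {x : ℝ} (h0 : 0 ≤ x) (h1 : x ≤ 1) : |expRem1 x| ≤ x ^ 2 := by
  have hx : |(-x)| ≤ 1 := by rw [abs_neg, abs_of_nonneg h0]; exact h1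
  have h := Real.abs_exp_sub_one_sub_id_le hx
  calc |expRem1 x| = |Real.exp (-x) - 1 - -x| := by unfold expRem1; congr 1; ring
    _ ≤ (-x) ^ 2 := h
    _ = x ^ 2 := by ring

lemma expRem3_abs_le {x : ℝ} (h0 : 0 ≤ x) (h1 : x ≤ 1) : |expRem3 x| ≤ x ^ 3 := by
  have hx : |(-x)| ≤ 1 := by rw [abs_neg, abs_of_nonneg h0]; exact h1
  have h := Real.exp_bound hx (n := 3) (by norm_num)
  have hsum : ∑ m ∈ Finset.range 3, (-x) ^ m / (m.factorial : ℝ) = 1 - x + x ^ 2 / 2 := by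
    simp [Finset.sum_range_succ]
    ring
  have habs : expRem3 x = Real.exp (-x) - ∑ m ∈ Finset.range 3, (-x) ^ m / (m.factorial : ℝ) := by
    rw [hsum]; unfold expRem3; ring
  calc |expRem3 x| = |Real.exp (-x) - ∑ m ∈ Finset.range 3, (-x) ^ m / (m.factorial : ℝ)| := by
        rw [habs]
    _ ≤ |(-x)| ^ 3 * ((3:ℕ).succ / ((3:ℕ).factorial * 3)) := h
    _ ≤ x ^ 3 := by
        rw [abs_neg, abs_of_nonneg h0]
        have h6 : (((3:ℕ).factorial : ℕ) : ℝ) = 6 := by norm_num [Nat.factorial]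
        have h4 : (((3:ℕ).succ : ℕ) : ℝ) = 4 := by norm_num
        rw [h6, h4]
        have hx3 : 0 ≤ x ^ 3 := pow_nonneg h0 3
        nlinarith

set_option maxHeartbeats 1600000

/-- Theorem 2.3. For standardized points (`∑ y_j = 0`,
`∑ y_j y_jᵀ = n I_d`), `16 a^{d/2+2} (nπ^{d/2})⁻¹ T_{n,a} → b̃_{1,d} + 2 b_{1,d}`
as `a → ∞`. -/
theorem Tstat_tendsto_skewness_atTop
    (d n : ℕ) (hd : 1 ≤ d) (hn : 1 ≤ n) (y : Fin n → EuclideanSpace ℝ (Fin d))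
    (hcenter : ∑ j, y j = 0)
    (hscatter : ∀ k l : Fin d, ∑ j, y j k * y j l = if k = l then (n : ℝ) else 0) :
    Tendsto (fun a : ℝ =>
        a ^ ((d : ℝ) / 2 + 2) / ((n : ℝ) * π ^ ((d : ℝ) / 2)) * (16 * Tstat d n y a))
      atTop (nhds (mrsSkew d n y + 2 * mardiaSkew d n y)) := by
  classical
  have hn0 : (0:ℝ) < (n:ℝ) := by exact_mod_cast hn
  have hnne : (n:ℝ) ≠ 0 := ne_of_gt hn0
  set c : ℝ := (d:ℝ)/2 with hcdef
  have hc0 : (0:ℝ) ≤ c := by rw [hcdef]; positivity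
  have hcneg : -(c+1) ≤ 0 := by linarith
  -- coordinates of the centering hypothesis
  have hcen : ∀ k : Fin d, ∑ j, y j k = 0 := by
    intro k
    have h2 := congrArg (fun v : EuclideanSpace ℝ (Fin d) => v k) hcenter
    simp at h2
    exact h2
  -- the Gram "matrix"
  obtain ⟨P, hPa⟩ : ∃ P : Fin n → Fin n → ℝ, ∀ i j, P i j = ∑ k, y i k * y j k :=
    ⟨_, fun i j => rfl⟩
  have hinner : ∀ i j, (inner ℝ (y i) (y j) : ℝ) = P i j := by
    intro i j
    rw [hPa]
    simp [PiLp.inner_apply, RCLike.inner_apply, mul_comm]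
  have hPsymm : ∀ i j, P i j = P j i := by
    intro i j
    rw [hPa, hPa]
    exact Finset.sum_congr rfl fun k _ => mul_comm _ _
  have hnorm : ∀ j, ‖y j‖ ^ 2 = P j j := fun j => by
    rw [← real_inner_self_eq_norm_sq, hinner]
  have hnormsub : ∀ i j, ‖y i - y j‖ ^ 2 = P i i + P j j - 2 * P i j := by
    intro i j
    rw [norm_sub_sq_real, hinner, hnorm, hnorm]
    ring
  have hPnn : ∀ j, (0:ℝ) ≤ P j j := fun j => by rw [← hnorm]; positivity
  have hwnn : ∀ i j, (0:ℝ) ≤ P i i + P j j - 2 * P i j := fun i j => by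
    rw [← hnormsub]; positivity
  -- basic sum identities
  have hrow : ∀ i, ∑ j, P i j = 0 := by
    intro i
    calc ∑ j, P i j = ∑ j, ∑ k, y i k * y j k := Finset.sum_congr rfl fun j _ => hPa i j
    _ = ∑ k, ∑ j, y i k * y j k := Finset.sum_comm
    _ = ∑ k : Fin d, y i k * ∑ j, y j k := Finset.sum_congr rfl fun k _ => (Finset.mul_sum _ _ _).symm
    _ = 0 := by simp [hcen]
  have hcol : ∀ j, ∑ i, P i j = 0 := by
    intro j
    calc ∑ i, P i j = ∑ i, P j i := Finset.sum_congr rfl fun i _ => hPsymm i j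
    _ = 0 := hrow j
  have htr : ∑ j, P j j = (n:ℝ) * (d:ℝ) := by
    calc ∑ j, P j j = ∑ j, ∑ k, y j k * y j k := Finset.sum_congr rfl fun j _ => hPa j j
    _ = ∑ k : Fin d, ∑ j, y j k * y j k := Finset.sum_comm
    _ = ∑ _k : Fin d, (n:ℝ) := Finset.sum_congr rfl fun k _ => by simpa using hscatter k k
    _ = (n:ℝ) * (d:ℝ) := by simp [Finset.sum_const, Finset.card_univ, mul_comm]
  have hkey : ∀ (f : Fin n → ℝ) (i : Fin n),
      ∑ j, f j * P i j = ∑ k, y i k * ∑ j, f j * y j k := by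
    intro f i
    calc ∑ j, f j * P i j = ∑ j, ∑ k, y i k * (f j * y j k) := by
          refine Finset.sum_congr rfl fun j _ => ?_
          rw [hPa, Finset.mul_sum]
          all_goals exact Finset.sum_congr rfl fun k _ => by ring
    _ = ∑ k, ∑ j, y i k * (f j * y j k) := Finset.sum_comm
    _ = ∑ k, y i k * ∑ j, f j * y j k := by
          refine Finset.sum_congr rfl fun k _ => ?_
          rw [Finset.mul_sum]
          all_goals exact Finset.sum_congr rfl fun j _ => by ring
  have hid3 : ∀ (i : Fin n) (k0 : Fin d), ∑ j, P i j * y j k0 = (n:ℝ) * y i k0 := by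
    intro i k0
    calc ∑ j, P i j * y j k0 = ∑ j, y j k0 * P i j :=
          Finset.sum_congr rfl fun j _ => mul_comm _ _
    _ = ∑ k, y i k * ∑ j, y j k0 * y j k := hkey (fun j => y j k0) i
    _ = ∑ k, y i k * (if k0 = k then (n:ℝ) else 0) := by
          refine Finset.sum_congr rfl fun k _ => ?_
          rw [hscatter k0 k]
    _ = (n:ℝ) * y i k0 := by simp [mul_ite, mul_comm]
  have hid2' : ∀ i, ∑ j, P i j ^ 2 = (n:ℝ) * P i i := by
    intro i
    calc ∑ j, P i j ^ 2 = ∑ j, P i j * P i j := Finset.sum_congr rfl fun j _ => by ring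
    _ = ∑ k, y i k * ∑ j, P i j * y j k := hkey (fun j => P i j) i
    _ = ∑ k, y i k * ((n:ℝ) * y i k) := by
          refine Finset.sum_congr rfl fun k _ => ?_
          rw [hid3 i k]
    _ = (n:ℝ) * P i i := by
          rw [hPa, Finset.mul_sum]
          all_goals exact Finset.sum_congr rfl fun k _ => by ring
  have hPP : ∑ i, ∑ j, P i j ^ 2 = (n:ℝ)^2 * (d:ℝ) := by
    calc ∑ i, ∑ j, P i j ^ 2 = ∑ i, (n:ℝ) * P i i := Finset.sum_congr rfl fun i _ => hid2' i
    _ = (n:ℝ) * ((n:ℝ) * (d:ℝ)) := by rw [← Finset.mul_sum, htr]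
    _ = (n:ℝ)^2 * (d:ℝ) := by ring
  have hzg_i : ∀ g : Fin n → ℝ, ∑ i, ∑ j, P i j * g i = 0 := by
    intro g
    have h1 : ∀ i, ∑ j, P i j * g i = 0 := fun i => by
      rw [← Finset.sum_mul, hrow i, zero_mul]
    simp [h1]
  have hzg_j : ∀ g : Fin n → ℝ, ∑ i, ∑ j, P i j * g j = 0 := by
    intro g
    rw [Finset.sum_comm]
    have h1 : ∀ j, ∑ i, P i j * g j = 0 := fun j => by
      rw [← Finset.sum_mul, hcol j, zero_mul]
    simp [h1]
  obtain ⟨Q, hQdef⟩ : ∃ q : ℝ, q = ∑ j, P j j ^ 2 := ⟨_, rfl⟩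
  obtain ⟨M3, hM3def⟩ : ∃ q : ℝ, q = ∑ i, ∑ j, P i j ^ 3 := ⟨_, rfl⟩
  obtain ⟨MT, hMTdef⟩ : ∃ q : ℝ, q = ∑ i, ∑ j, P i j * P i i * P j j := ⟨_, rfl⟩
  have hQ4 : ∑ i, ∑ j, P i j ^ 2 * P i i = (n:ℝ) * Q := by
    calc ∑ i, ∑ j, P i j ^ 2 * P i i = ∑ i, (∑ j, P i j ^ 2) * P i i :=
          Finset.sum_congr rfl fun i _ => (Finset.sum_mul _ _ _).symm
    _ = ∑ i, (n:ℝ) * P i i ^ 2 := by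
          refine Finset.sum_congr rfl fun i _ => ?_
          rw [hid2' i]; ring
    _ = (n:ℝ) * Q := by rw [← Finset.mul_sum, hQdef]
  have hQ4' : ∑ i, ∑ j, P i j ^ 2 * P j j = (n:ℝ) * Q := by
    calc ∑ i, ∑ j, P i j ^ 2 * P j j = ∑ j, ∑ i, P i j ^ 2 * P j j := Finset.sum_comm
    _ = ∑ j, ∑ i, P j i ^ 2 * P j j := by
          refine Finset.sum_congr rfl fun j _ => Finset.sum_congr rfl fun i _ => ?_
          rw [hPsymm i j]
    _ = ∑ j, (∑ i, P j i ^ 2) * P j j :=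
          Finset.sum_congr rfl fun j _ => (Finset.sum_mul _ _ _).symm
    _ = ∑ j, (n:ℝ) * P j j ^ 2 := by
          refine Finset.sum_congr rfl fun j _ => ?_
          rw [hid2' j]; ring
    _ = (n:ℝ) * Q := by rw [← Finset.mul_sum, hQdef]
  have hz1 : ∑ i, ∑ j, P i j * P i i = 0 := by simpa using hzg_i (fun i => P i i)
  have hz2 : ∑ i, ∑ j, P i j * P j j = 0 := by simpa using hzg_j (fun j => P j j)
  have hz3 : ∑ i, ∑ j, P i j * (P i i * P i i) = 0 := by
    simpa using hzg_i (fun i => P i i * P i i)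
  have hz4 : ∑ i, ∑ j, P i j * (P j j * P j j) = 0 := by
    simpa using hzg_j (fun j => P j j * P j j)
  have hPW : ∑ i, ∑ j, P i j * (P i i + P j j - 2 * P i j) = -(2*((n:ℝ)^2*(d:ℝ))) := by
    calc ∑ i, ∑ j, P i j * (P i i + P j j - 2 * P i j)
        = ∑ i, ∑ j, (P i j * P i i + P i j * P j j - 2*(P i j ^ 2)) := by
          exact Finset.sum_congr rfl fun i _ => Finset.sum_congr rfl fun j _ => by ring
    _ = (∑ i, ∑ j, P i j * P i i) + (∑ i, ∑ j, P i j * P j j) - 2*(∑ i, ∑ j, P i j ^ 2) := by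
          simp only [Finset.sum_add_distrib, Finset.sum_sub_distrib, ← Finset.mul_sum]
    _ = -(2*((n:ℝ)^2*(d:ℝ))) := by rw [hz1, hz2, hPP]; ring
  have hPW2 : ∑ i, ∑ j, P i j * (P i i + P j j - 2 * P i j) ^ 2
      = 4*M3 + 2*MT - 8*(n:ℝ)*Q := by
    calc ∑ i, ∑ j, P i j * (P i i + P j j - 2 * P i j) ^ 2
        = ∑ i, ∑ j, (P i j * (P i i * P i i) + P i j * (P j j * P j j) + 4*(P i j ^ 3)
            + 2*(P i j * P i i * P j j) - 4*(P i j ^ 2 * P i i) - 4*(P i j ^ 2 * P j j)) := by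
          exact Finset.sum_congr rfl fun i _ => Finset.sum_congr rfl fun j _ => by ring
    _ = (∑ i, ∑ j, P i j * (P i i * P i i)) + (∑ i, ∑ j, P i j * (P j j * P j j))
          + 4*(∑ i, ∑ j, P i j ^ 3) + 2*(∑ i, ∑ j, P i j * P i i * P j j)
          - 4*(∑ i, ∑ j, P i j ^ 2 * P i i) - 4*(∑ i, ∑ j, P i j ^ 2 * P j j) := by
          simp only [Finset.sum_add_distrib, Finset.sum_sub_distrib, ← Finset.mul_sum]
    _ = 4*M3 + 2*MT - 8*(n:ℝ)*Q := by
          rw [hz3, hz4, hQ4, hQ4', ← hM3def, ← hMTdef]; ring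
  have hSP : ∑ i, ∑ j, P i j = 0 := by simp [hrow]
  -- derivative/slope machinery for the rpow factor
  have hder : HasDerivAt (fun t : ℝ => (1+t) ^ (-(c+1))) (-(c+1)) 0 := by
    have hbase : HasDerivAt (fun t : ℝ => 1 + t) 1 0 := by
      simpa using (hasDerivAt_id (0:ℝ)).const_add (1:ℝ)
    have h2 := hbase.rpow_const (p := -(c+1)) (Or.inl (by norm_num))
    simpa [Real.one_rpow] using h2
  have hsl := hasDerivAt_iff_tendsto_slope.mp hder
  have ht1 : Tendsto (fun a : ℝ => 1/a) atTop (𝓝[≠] (0:ℝ)) := by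
    rw [tendsto_nhdsWithin_iff]
    constructor
    · simpa [one_div] using (tendsto_inv_atTop_zero : Tendsto (fun r : ℝ => r⁻¹) atTop (𝓝 0))
    · filter_upwards [eventually_gt_atTop (0:ℝ)] with a ha
      simp only [Set.mem_compl_iff, Set.mem_singleton_iff, one_div, inv_eq_zero]
      exact ha.ne'
  have hinv2a : Tendsto (fun a : ℝ => 1/(2*a)) atTop (𝓝 0) := by
    have h2a : Tendsto (fun a : ℝ => 2*a) atTop atTop :=
      Tendsto.const_mul_atTop two_pos tendsto_id
    have hcomp := tendsto_inv_atTop_zero.comp h2a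
    refine Tendsto.congr ?_ hcomp
    intro a
    simp [Function.comp, one_div]
  have ht2 : Tendsto (fun a : ℝ => 1/(2*a)) atTop (𝓝[≠] (0:ℝ)) := by
    rw [tendsto_nhdsWithin_iff]
    constructor
    · exact hinv2a
    · filter_upwards [eventually_gt_atTop (0:ℝ)] with a ha
      simp only [Set.mem_compl_iff, Set.mem_singleton_iff, one_div, inv_eq_zero]
      exact (by positivity : (0:ℝ) < 2*a).ne'
  have hb2 : Tendsto (fun a : ℝ => 1 + 1/(2*a)) atTop (𝓝 1) := by
    simpa using tendsto_const_nhds.add hinv2a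
  have tY : Tendsto (fun a : ℝ => (1+1/(2*a)) ^ (-(c+1))) atTop (𝓝 1) := by
    have := hb2.rpow_const (p := -(c+1)) (Or.inl one_ne_zero)
    simpa [Real.one_rpow] using this
  have tq : Tendsto (fun a : ℝ => a/(4*a+2)) atTop (𝓝 (4⁻¹)) := by
    have h1 : Tendsto (fun a : ℝ => 4 + 2*a⁻¹) atTop (𝓝 (4 + 2*0)) :=
      tendsto_const_nhds.add (tendsto_inv_atTop_zero.const_mul (2:ℝ))
    have h2 : Tendsto (fun a : ℝ => (4 + 2*a⁻¹)⁻¹) atTop (𝓝 ((4 + 2*0)⁻¹)) :=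
      h1.inv₀ (by norm_num)
    have h3 : Tendsto (fun a : ℝ => (4 + 2*a⁻¹)⁻¹) atTop (𝓝 (4⁻¹)) := by
      convert h2 using 2; norm_num
    refine Tendsto.congr' ?_ h3
    filter_upwards [eventually_gt_atTop (0:ℝ)] with a ha
    field_simp
  -- the remainder pieces tend to zero
  have t3j : ∀ m : ℝ, 0 ≤ m →
      Tendsto (fun a : ℝ => a * (1+1/(2*a)) ^ (-(c+1)) * expRem1 (m/(4*a+2))) atTop (𝓝 0) := by
    intro m hm
    have hglim : Tendsto (fun b : ℝ => m^2 * b⁻¹) atTop (𝓝 (0:ℝ)) := by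
      have h0 := tendsto_inv_atTop_zero.const_mul (m^2)
      simpa using h0
    refine squeeze_zero_norm' ?_ hglim
    filter_upwards [eventually_ge_atTop (max 1 m)] with a ha
    have ha1 : (1:ℝ) ≤ a := le_trans (le_max_left _ _) ha
    have ham : m ≤ a := le_trans (le_max_right _ _) ha
    have ha0 : (0:ℝ) < a := lt_of_lt_of_le one_pos ha1
    have hY0 : (0:ℝ) ≤ (1+1/(2*a)) ^ (-(c+1)) := Real.rpow_nonneg (by positivity) _
    have hY1 : (1+1/(2*a)) ^ (-(c+1)) ≤ 1 :=
      Real.rpow_le_one_of_one_le_of_nonpos (le_add_of_nonneg_right (by positivity)) hcneg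
    have hv0 : (0:ℝ) ≤ m/(4*a+2) := by positivity
    have hv1 : m/(4*a+2) ≤ 1 := by
      rw [div_le_one (by linarith)]
      linarith
    have hb := expRem1_abs_le hv0 hv1
    rw [Real.norm_eq_abs, abs_mul]
    have h1 : |a * (1+1/(2*a)) ^ (-(c+1))| ≤ a := by
      rw [abs_of_nonneg (by positivity)]
      nlinarith
    have hstep : |a * (1+1/(2*a)) ^ (-(c+1))| * |expRem1 (m/(4*a+2))| ≤ a * (m/(4*a+2))^2 :=
      mul_le_mul h1 hb (abs_nonneg _) ha0.le
    refine le_trans hstep ?_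
    have hmono : m/(4*a+2) ≤ m/a := div_le_div_of_nonneg_left hm ha0 (by linarith)
    calc a * (m/(4*a+2))^2 ≤ a * (m/a)^2 :=
          mul_le_mul_of_nonneg_left (pow_le_pow_left₀ hv0 hmono 2) ha0.le
    _ = m^2 * a⁻¹ := by field_simp
  have t5w : ∀ w : ℝ, 0 ≤ w →
      Tendsto (fun a : ℝ => a^2 * expRem3 (w/(4*a))) atTop (𝓝 0) := by
    intro w hw
    have hglim : Tendsto (fun b : ℝ => w^3 * b⁻¹) atTop (𝓝 (0:ℝ)) := by
      have h0 := tendsto_inv_atTop_zero.const_mul (w^3)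
      simpa using h0
    refine squeeze_zero_norm' ?_ hglim
    filter_upwards [eventually_ge_atTop (max 1 w)] with a ha
    have ha1 : (1:ℝ) ≤ a := le_trans (le_max_left _ _) ha
    have haw : w ≤ a := le_trans (le_max_right _ _) ha
    have ha0 : (0:ℝ) < a := lt_of_lt_of_le one_pos ha1
    have hu0 : (0:ℝ) ≤ w/(4*a) := by positivity
    have hu1 : w/(4*a) ≤ 1 := by
      rw [div_le_one (by positivity)]
      linarith
    have hb := expRem3_abs_le hu0 hu1
    rw [Real.norm_eq_abs, abs_mul, abs_of_nonneg (sq_nonneg a)]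
    calc a^2 * |expRem3 (w/(4*a))| ≤ a^2 * (w/(4*a))^3 :=
          mul_le_mul_of_nonneg_left hb (sq_nonneg a)
    _ = w^3/(64*a) := by field_simp; ring
    _ ≤ w^3 * a⁻¹ := by
        rw [div_eq_mul_inv]
        refine mul_le_mul_of_nonneg_left ?_ (pow_nonneg hw 3)
        exact inv_anti₀ ha0 (by linarith)
  -- the comparison function F
  set Fb : ℝ → ℝ := fun a =>
    8*(d:ℝ) * (slope (fun t : ℝ => (1+t) ^ (-(c+1))) 0 (1/a)
        - slope (fun t : ℝ => (1+t) ^ (-(c+1))) 0 (1/(2*a)))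
    + (16*Q/(n:ℝ)) * (a/(4*a+2) * (1+1/(2*a)) ^ (-(c+1)))
    - (16/(n:ℝ)) * ∑ j, P j j * (a * (1+1/(2*a)) ^ (-(c+1)) * expRem1 (P j j/(4*a+2)))
    + (MT/(n:ℝ)^2 + 2*M3/(n:ℝ)^2 - 4*Q/(n:ℝ))
    + (16/(n:ℝ)^2) * ∑ i, ∑ j, P i j * (a^2 * expRem3 ((P i i + P j j - 2*P i j)/(4*a)))
    with hFbdef
  have hFlim : Tendsto Fb atTop (𝓝 (8*(d:ℝ)*((-(c+1)) - (-(c+1))) + (16*Q/(n:ℝ))*(4⁻¹*1)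
      - (16/(n:ℝ))*(∑ j : Fin n, P j j * 0) + (MT/(n:ℝ)^2 + 2*M3/(n:ℝ)^2 - 4*Q/(n:ℝ))
      + (16/(n:ℝ)^2)*(∑ i : Fin n, ∑ j : Fin n, P i j * 0))) := by
    rw [hFbdef]
    refine Tendsto.add (Tendsto.add (Tendsto.sub (Tendsto.add ?_ ?_) ?_) tendsto_const_nhds) ?_
    · exact ((hsl.comp ht1).sub (hsl.comp ht2)).const_mul (8*(d:ℝ))
    · exact (tq.mul tY).const_mul (16*Q/(n:ℝ))
    · refine (tendsto_finset_sum _ fun j _ => ?_).const_mul (16/(n:ℝ))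
      exact (t3j (P j j) (hPnn j)).const_mul (P j j)
    · refine (tendsto_finset_sum _ fun i _ => tendsto_finset_sum _ fun j _ => ?_).const_mul
        (16/(n:ℝ)^2)
      exact (t5w (P i i + P j j - 2*P i j) (hwnn i j)).const_mul (P i j)
  have h1mar : mardiaSkew d n y = M3/(n:ℝ)^2 := by
    simp only [mardiaSkew, hinner]
    rw [← hM3def]; ring
  have h2mrs : mrsSkew d n y = MT/(n:ℝ)^2 := by
    simp only [mrsSkew, hinner, hnorm]
    rw [← hMTdef]; ring
  have hLv : (8*(d:ℝ)*((-(c+1)) - (-(c+1))) + (16*Q/(n:ℝ))*(4⁻¹*1)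
      - (16/(n:ℝ))*(∑ j : Fin n, P j j * 0) + (MT/(n:ℝ)^2 + 2*M3/(n:ℝ)^2 - 4*Q/(n:ℝ))
      + (16/(n:ℝ)^2)*(∑ i : Fin n, ∑ j : Fin n, P i j * 0))
      = mrsSkew d n y + 2 * mardiaSkew d n y := by
    rw [h1mar, h2mrs]
    simp only [mul_zero, Finset.sum_const_zero]
    ring
  -- the eventual equality between Fb and the scaled statistic
  have heq : Fb =ᶠ[atTop] (fun a : ℝ =>
      a ^ (c + 2) / ((n:ℝ) * π ^ c) * (16 * Tstat d n y a)) := by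
    filter_upwards [eventually_gt_atTop (0:ℝ)] with a ha
    have ha' : a ≠ 0 := ne_of_gt ha
    have ha1 : (0:ℝ) < a + 1 := by linarith
    have h2a1 : (0:ℝ) < 2*a + 1 := by linarith
    have h4a2 : (0:ℝ) < 4*a + 2 := by linarith
    have hpc : (0:ℝ) < π ^ c := Real.rpow_pos_of_pos Real.pi_pos c
    have hac : (0:ℝ) < a ^ c := Real.rpow_pos_of_pos ha c
    have ha1c : (0:ℝ) < (a+1) ^ c := Real.rpow_pos_of_pos ha1 c
    have h2a1c : (0:ℝ) < (2*a+1) ^ c := Real.rpow_pos_of_pos h2a1 c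
    have h2c : (0:ℝ) < (2:ℝ) ^ c := Real.rpow_pos_of_pos two_pos c
    have hac2 : (0:ℝ) < a ^ (c+2) := Real.rpow_pos_of_pos ha _
    have hsa : ∀ x : ℝ, 0 < x → x ^ (c+1) = x ^ c * x := fun x hx => by
      rw [Real.rpow_add hx, Real.rpow_one]
    have hsa2 : ∀ x : ℝ, 0 < x → x ^ (c+2) = x ^ c * x * x := fun x hx => by
      rw [show c+2 = c+1+1 by ring, Real.rpow_add hx, Real.rpow_one, hsa x hx]
    -- rewrite the statistic
    have hT : Tstat d n y a
        = (n:ℝ) * (π/(a+1)) ^ c * ((d:ℝ)/(2*(a+1)))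
          - 2*(2*π/(2*a+1)) ^ c
              * ((∑ j, P j j * Real.exp (-P j j/(4*a+2))) * (2*a+1)⁻¹)
          + (n:ℝ)⁻¹ * (π/a) ^ c
              * (∑ i, ∑ j, P i j * Real.exp (-(P i i + P j j - 2*P i j)/(4*a))) := by
      simp only [Tstat, hinner, hnorm, hnormsub, ← hcdef]
      rw [show (∑ j, P j j/(2*a+1) * Real.exp (-P j j/(4*a+2)))
          = (∑ j, P j j * Real.exp (-P j j/(4*a+2))) * (2*a+1)⁻¹ from by
        rw [Finset.sum_mul]
        exact Finset.sum_congr rfl fun j _ => by ring]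
    -- rpow coefficient identities
    have hA : (π/(a+1)) ^ c = π ^ c * (a * ((1 + 1/a) ^ (-(c+1)))) * (a+1) / a ^ (c+2) := by
      have hX : ((1:ℝ) + 1/a) ^ (-(c+1)) = ((a+1) ^ (c+1))⁻¹ * a ^ (c+1) := by
        rw [show (1:ℝ) + 1/a = (a+1)/a by field_simp]
        rw [Real.div_rpow ha1.le ha.le]
        rw [Real.rpow_neg ha1.le, Real.rpow_neg ha.le, div_inv_eq_mul]
      rw [hX, Real.div_rpow Real.pi_pos.le ha1.le, hsa2 a ha, hsa (a+1) ha1, hsa a ha]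
      field_simp
    have hB : (2*π/(2*a+1)) ^ c
        = π ^ c * (a * ((1 + 1/(2*a)) ^ (-(c+1)))) * (2*a+1) / (2 * a ^ (c+2)) := by
      have h2a : (0:ℝ) < 2*a := by linarith
      have hY : ((1:ℝ) + 1/(2*a)) ^ (-(c+1)) = ((2*a+1) ^ (c+1))⁻¹ * (2*a) ^ (c+1) := by
        rw [show (1:ℝ) + 1/(2*a) = (2*a+1)/(2*a) by field_simp]
        rw [Real.div_rpow h2a1.le h2a.le]
        rw [Real.rpow_neg h2a1.le, Real.rpow_neg h2a.le, div_inv_eq_mul]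
      rw [hY, Real.div_rpow (by positivity) h2a1.le,
        Real.mul_rpow (by norm_num) Real.pi_pos.le,
        Real.mul_rpow (by norm_num : (0:ℝ) ≤ 2) ha.le,
        hsa2 a ha, hsa (2*a+1) h2a1, hsa 2 two_pos, hsa a ha]
      field_simp
    have hC : (π/a) ^ c = π ^ c * a^2 / a ^ (c+2) := by
      rw [Real.div_rpow Real.pi_pos.le ha.le, hsa2 a ha]
      field_simp
    -- slope values
    have hs1 : slope (fun t : ℝ => (1+t) ^ (-(c+1))) 0 (1/a)
        = a * ((1 + 1/a) ^ (-(c+1))) - a := by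
      rw [slope_def_field]
      show ((1 + 1/a) ^ (-(c+1)) - (1 + 0) ^ (-(c+1))) / (1/a - 0) = _
      rw [show ((1:ℝ) + 0) ^ (-(c+1)) = 1 by norm_num [Real.one_rpow]]
      field_simp
      ring
    have hs2 : slope (fun t : ℝ => (1+t) ^ (-(c+1))) 0 (1/(2*a))
        = 2*a * ((1 + 1/(2*a)) ^ (-(c+1))) - 2*a := by
      rw [slope_def_field]
      show ((1 + 1/(2*a)) ^ (-(c+1)) - (1 + 0) ^ (-(c+1))) / (1/(2*a) - 0) = _
      rw [show ((1:ℝ) + 0) ^ (-(c+1)) = 1 by norm_num [Real.one_rpow]]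
      field_simp
      ring
    -- expansions of the exponential sums
    have hS2exp : ∑ j, P j j * Real.exp (-P j j/(4*a+2))
        = (n:ℝ)*(d:ℝ) - Q * (4*a+2)⁻¹ + ∑ j, P j j * expRem1 (P j j/(4*a+2)) := by
      have hpt : ∀ j : Fin n, P j j * Real.exp (-P j j/(4*a+2))
          = P j j - P j j ^ 2 * (4*a+2)⁻¹ + P j j * expRem1 (P j j/(4*a+2)) := by
        intro j
        simp only [expRem1]
        rw [neg_div]
        ring
      rw [Finset.sum_congr rfl fun j _ => hpt j]
      simp only [Finset.sum_add_distrib, Finset.sum_sub_distrib, ← Finset.sum_mul]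
      rw [htr, ← hQdef]
    have hS3exp : ∑ i, ∑ j, P i j * Real.exp (-(P i i + P j j - 2*P i j)/(4*a))
        = (n:ℝ)^2*(d:ℝ) * (2*a)⁻¹ + (4*M3 + 2*MT - 8*(n:ℝ)*Q) * (32*a^2)⁻¹
          + ∑ i, ∑ j, P i j * expRem3 ((P i i + P j j - 2*P i j)/(4*a)) := by
      have hpt : ∀ i j, P i j * Real.exp (-(P i i + P j j - 2*P i j)/(4*a))
          = P i j - (P i j * (P i i + P j j - 2*P i j)) * (4*a)⁻¹
            + (P i j * (P i i + P j j - 2*P i j) ^ 2) * (32*a^2)⁻¹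
            + P i j * expRem3 ((P i i + P j j - 2*P i j)/(4*a)) := by
        intro i j
        simp only [expRem3]
        rw [neg_div]
        field_simp
        ring
      rw [Finset.sum_congr rfl fun i _ => Finset.sum_congr rfl fun j _ => hpt i j]
      simp only [Finset.sum_add_distrib, Finset.sum_sub_distrib, ← Finset.sum_mul]
      rw [hSP, hPW, hPW2]
      field_simp
      ring
    -- restructure the remainder sums in Fb
    have hp3 : ∑ j, P j j * (a * (1+1/(2*a)) ^ (-(c+1)) * expRem1 (P j j/(4*a+2)))
        = (a * ((1+1/(2*a)) ^ (-(c+1)))) * ∑ j, P j j * expRem1 (P j j/(4*a+2)) := by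
      rw [Finset.mul_sum]
      exact Finset.sum_congr rfl fun j _ => by ring
    have hp5 : ∑ i, ∑ j, P i j * (a^2 * expRem3 ((P i i + P j j - 2*P i j)/(4*a)))
        = a^2 * ∑ i, ∑ j, P i j * expRem3 ((P i i + P j j - 2*P i j)/(4*a)) := by
      rw [Finset.mul_sum]
      refine Finset.sum_congr rfl fun i _ => ?_
      rw [Finset.mul_sum]
      exact Finset.sum_congr rfl fun j _ => by ring
    rw [hFbdef]
    show 8*(d:ℝ) * (slope (fun t : ℝ => (1+t) ^ (-(c+1))) 0 (1/a)
        - slope (fun t : ℝ => (1+t) ^ (-(c+1))) 0 (1/(2*a)))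
      + (16*Q/(n:ℝ)) * (a/(4*a+2) * (1+1/(2*a)) ^ (-(c+1)))
      - (16/(n:ℝ)) * ∑ j, P j j * (a * (1+1/(2*a)) ^ (-(c+1)) * expRem1 (P j j/(4*a+2)))
      + (MT/(n:ℝ)^2 + 2*M3/(n:ℝ)^2 - 4*Q/(n:ℝ))
      + (16/(n:ℝ)^2) * ∑ i, ∑ j, P i j * (a^2 * expRem3 ((P i i + P j j - 2*P i j)/(4*a)))
      = a ^ (c + 2) / ((n:ℝ) * π ^ c) * (16 * Tstat d n y a)
    rw [hT, hA, hB, hC, hs1, hs2, hp3, hp5, hS2exp, hS3exp]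
    field_simp
    ring
  exact Tendsto.congr' heq (by rwa [hLv] at hFlim)
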